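/- Let k be a field and H a k-Hopf algebra with comultiplication Δ(h) = Σ h₍₁₎⊗h₍₂₎ and antipode S. Then the k-linear map R' : H⊗H → H⊗H defined by R'(g⊗h) = Σ g₍₁₎ ⊗ S(g₍₂₎)h is a solution of the Hopf equation (R'¹²R'²³ = R'²³R'¹³R'¹²). -/

import Mathlib

open TensorProduct LinearMap

section HopfEq

variable (k V : Type*) [Field k] [AddCommGroup V] [Module k V]

/-- The flip map `τ : V ⊗ V → V ⊗ V`, `τ(v ⊗ w) = w ⊗ v`. -/
noncomputable def flipMap : V ⊗[k] V →ₗ[k] V ⊗[k] V :=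
  (TensorProduct.comm k V V).toLinearMap

variable {k V}

/-- `R¹² = R ⊗ I` as an endomorphism of `V ⊗ V ⊗ V`. -/
noncomputable def map12 (R : V ⊗[k] V →ₗ[k] V ⊗[k] V) :
    V ⊗[k] (V ⊗[k] V) →ₗ[k] V ⊗[k] (V ⊗[k] V) :=
  (TensorProduct.assoc k V V V).toLinearMap ∘ₗ R.rTensor V ∘ₗ
    (TensorProduct.assoc k V V V).symm.toLinearMap

/-- `R²³ = I ⊗ R` as an endomorphism of `V ⊗ V ⊗ V`. -/
noncomputable def map23 (R : V ⊗[k] V →ₗ[k] V ⊗[k] V) :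
    V ⊗[k] (V ⊗[k] V) →ₗ[k] V ⊗[k] (V ⊗[k] V) :=
  R.lTensor V

/-- `R¹³ = (I ⊗ τ)(R ⊗ I)(I ⊗ τ)` as an endomorphism of `V ⊗ V ⊗ V`. -/
noncomputable def map13 (R : V ⊗[k] V →ₗ[k] V ⊗[k] V) :
    V ⊗[k] (V ⊗[k] V) →ₗ[k] V ⊗[k] (V ⊗[k] V) :=
  (flipMap k V).lTensor V ∘ₗ map12 R ∘ₗ (flipMap k V).lTensor V

/-- `R` is a solution of the Hopf equation: `R¹²R²³ = R²³R¹³R¹²`. -/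
def IsHopfSolution (R : V ⊗[k] V →ₗ[k] V ⊗[k] V) : Prop :=
  map12 R ∘ₗ map23 R = map23 R ∘ₗ map13 R ∘ₗ map12 R

/-- `R` is a solution of the pentagonal equation: `R¹²R¹³R²³ = R²³R¹²`. -/
def IsPentagonSolution (R : V ⊗[k] V →ₗ[k] V ⊗[k] V) : Prop :=
  map12 R ∘ₗ map13 R ∘ₗ map23 R = map23 R ∘ₗ map12 R

end HopfEq

variable (k H : Type*) [Field k] [Ring H] [HopfAlgebra k H]

/-- The map `R' : H ⊗ H → H ⊗ H`, `R'(g ⊗ h) = Σ g₍₁₎ ⊗ S(g₍₂₎)h`. -/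
noncomputable def antipodeMap : H ⊗[k] H →ₗ[k] H ⊗[k] H :=
  LinearMap.lTensor H
      (LinearMap.mul' k H ∘ₗ LinearMap.rTensor H (HopfAlgebra.antipode (R := k))) ∘ₗ
    (TensorProduct.assoc k H H H).toLinearMap ∘ₗ
    LinearMap.rTensor H (Coalgebra.comul (R := k))


section CompLemmas

variable {k V : Type*} [Field k] [AddCommGroup V] [Module k V]

lemma flipMap_flipMap : (flipMap k V) ∘ₗ (flipMap k V) = LinearMap.id := by
  apply TensorProduct.ext'
  intro v w
  simp [flipMap]

lemma map12_comp (f g : V ⊗[k] V →ₗ[k] V ⊗[k] V) :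
    map12 (f ∘ₗ g) = map12 f ∘ₗ map12 g := by
  unfold map12
  rw [LinearMap.rTensor_comp]
  apply LinearMap.ext
  intro x
  simp [LinearMap.comp_apply]

lemma map12_id : map12 (LinearMap.id : V ⊗[k] V →ₗ[k] V ⊗[k] V) = LinearMap.id := by
  unfold map12
  rw [LinearMap.rTensor_id]
  apply LinearMap.ext
  intro x
  simp [LinearMap.comp_apply]

lemma map23_comp (f g : V ⊗[k] V →ₗ[k] V ⊗[k] V) :
    map23 (f ∘ₗ g) = map23 f ∘ₗ map23 g := by
  unfold map23
  rw [LinearMap.lTensor_comp]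

lemma map23_id : map23 (LinearMap.id : V ⊗[k] V →ₗ[k] V ⊗[k] V) = LinearMap.id := by
  unfold map23
  rw [LinearMap.lTensor_id]

lemma lflip_lflip (y : V ⊗[k] (V ⊗[k] V)) :
    (flipMap k V).lTensor V ((flipMap k V).lTensor V y) = y := by
  rw [← LinearMap.comp_apply, ← LinearMap.lTensor_comp, flipMap_flipMap,
    LinearMap.lTensor_id, LinearMap.id_apply]

lemma map13_id : map13 (LinearMap.id : V ⊗[k] V →ₗ[k] V ⊗[k] V) = LinearMap.id := by
  unfold map13
  rw [map12_id]
  apply LinearMap.ext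
  intro x
  simp [LinearMap.comp_apply, lflip_lflip]

lemma map13_comp (f g : V ⊗[k] V →ₗ[k] V ⊗[k] V) :
    map13 (f ∘ₗ g) = map13 f ∘ₗ map13 g := by
  unfold map13
  rw [map12_comp]
  apply LinearMap.ext
  intro x
  simp [LinearMap.comp_apply, lflip_lflip]

/-- The key monoid computation: if `a b c` are invertible and satisfy the pentagon
equation, then their inverses satisfy the Hopf equation. -/
lemma monoid_hopf_of_pentagon {M : Type*} [Monoid M] {a a' b b' c c' : M}
    (ha : a * a' = 1) (ha' : a' * a = 1) (hb : b * b' = 1) (hb' : b' * b = 1)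
    (hc : c * c' = 1) (hc' : c' * c = 1)
    (hp : a * b * c = c * a) : a' * c' = c' * (b' * a') := by
  let ua : Mˣ := ⟨a, a', ha, ha'⟩
  let ub : Mˣ := ⟨b, b', hb, hb'⟩
  let uc : Mˣ := ⟨c, c', hc, hc'⟩
  have h : ua * ub * uc = uc * ua := Units.ext hp
  have h2 : (ua * ub * uc)⁻¹ = (uc * ua)⁻¹ := by rw [h]
  rw [mul_inv_rev, mul_inv_rev, mul_inv_rev] at h2
  have := congrArg Units.val h2
  simpa [ua, ub, uc, mul_assoc] using this.symm

end CompLemmas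

open Coalgebra HopfAlgebra in
/-- The fundamental operator `W : H ⊗ H → H ⊗ H`, `W(g ⊗ h) = Σ g₍₁₎ ⊗ g₍₂₎h`. -/
noncomputable def fundOp : H ⊗[k] H →ₗ[k] H ⊗[k] H :=
  LinearMap.lTensor H (LinearMap.mul' k H) ∘ₗ
    (TensorProduct.assoc k H H H).toLinearMap ∘ₗ
    LinearMap.rTensor H (Coalgebra.comul (R := k))

open Coalgebra HopfAlgebra

lemma antipodeMap_tmul {ι : Type*} (g h : H) (r : Coalgebra.Repr k g ι) :
    antipodeMap k H (g ⊗ₜ[k] h) =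
      ∑ i ∈ r.index, r.left i ⊗ₜ[k] (antipode (R := k) (r.right i) * h) := by
  simp [antipodeMap, LinearMap.comp_apply, LinearMap.rTensor_tmul, ← r.eq,
    TensorProduct.sum_tmul, map_sum, TensorProduct.assoc_tmul,
    LinearMap.lTensor_tmul, LinearMap.mul'_apply]

lemma fundOp_tmul {ι : Type*} (g h : H) (r : Coalgebra.Repr k g ι) :
    fundOp k H (g ⊗ₜ[k] h) = ∑ i ∈ r.index, r.left i ⊗ₜ[k] (r.right i * h) := by
  simp [fundOp, LinearMap.comp_apply, LinearMap.rTensor_tmul, ← r.eq,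
    TensorProduct.sum_tmul, map_sum, TensorProduct.assoc_tmul,
    LinearMap.lTensor_tmul, LinearMap.mul'_apply]

lemma sum_counit_smul {ι : Type*} (g : H) (r : Coalgebra.Repr k g ι) :
    ∑ i ∈ r.index, counit (R := k) (r.right i) • r.left i = g := by
  have h1 := Coalgebra.sum_tmul_counit_eq (R := k) r
  have h2 := congrArg (TensorProduct.rid k H).toLinearMap h1
  simp only [map_sum, LinearEquiv.coe_coe, TensorProduct.rid_tmul] at h2
  simpa using h2

lemma fundOp_comp_antipodeMap : fundOp k H ∘ₗ antipodeMap k H = LinearMap.id := by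
  apply TensorProduct.ext'
  intro g h
  rw [LinearMap.comp_apply, LinearMap.id_apply]
  have r : Coalgebra.Repr k g (H × H) := ℛ k g
  have r1 : ∀ i : H × H, Coalgebra.Repr k (r.left i) (H × H) := fun i => ℛ k (r.left i)
  have r2 : ∀ i : H × H, Coalgebra.Repr k (r.right i) (H × H) := fun i => ℛ k (r.right i)
  calc fundOp k H (antipodeMap k H (g ⊗ₜ[k] h))
      = ∑ i ∈ r.index, ∑ j ∈ (r1 i).index,
          (r1 i).left j ⊗ₜ[k] ((r1 i).right j * (antipode (R := k) (r.right i) * h)) := by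
        rw [antipodeMap_tmul k H g h r, map_sum]
        exact Finset.sum_congr rfl fun i _ => fundOp_tmul k H _ _ (r1 i)
    _ = ∑ i ∈ r.index, ∑ j ∈ (r2 i).index,
          r.left i ⊗ₜ[k] ((r2 i).left j * (antipode (R := k) ((r2 i).right j) * h)) := by
        have key := Coalgebra.sum_tmul_tmul_eq (R := k) r r1 r2
        have h2 := congrArg (LinearMap.lTensor H (LinearMap.mul' k H ∘ₗ
          LinearMap.lTensor H ((LinearMap.mulRight k h) ∘ₗ antipode (R := k)))) key
        simpa [map_sum] using h2
    _ = ∑ i ∈ r.index, r.left i ⊗ₜ[k] (algebraMap k H (counit (R := k) (r.right i)) * h) := by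
        refine Finset.sum_congr rfl fun i _ => ?_
        rw [← TensorProduct.tmul_sum]
        congr 1
        calc ∑ j ∈ (r2 i).index, (r2 i).left j * (antipode (R := k) ((r2 i).right j) * h)
            = (∑ j ∈ (r2 i).index, (r2 i).left j * antipode (R := k) ((r2 i).right j)) * h := by
              rw [Finset.sum_mul]
              exact Finset.sum_congr rfl fun j _ => (mul_assoc _ _ _).symm
          _ = algebraMap k H (counit (R := k) (r.right i)) * h := by
              rw [sum_mul_antipode_eq_algebraMap_counit]
    _ = g ⊗ₜ[k] h := by
        simp_rw [← Algebra.smul_def, TensorProduct.tmul_smul, TensorProduct.smul_tmul',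
          ← TensorProduct.sum_tmul]
        rw [sum_counit_smul k H g r]

lemma antipodeMap_comp_fundOp : antipodeMap k H ∘ₗ fundOp k H = LinearMap.id := by
  apply TensorProduct.ext'
  intro g h
  rw [LinearMap.comp_apply, LinearMap.id_apply]
  have r : Coalgebra.Repr k g (H × H) := ℛ k g
  have r1 : ∀ i : H × H, Coalgebra.Repr k (r.left i) (H × H) := fun i => ℛ k (r.left i)
  have r2 : ∀ i : H × H, Coalgebra.Repr k (r.right i) (H × H) := fun i => ℛ k (r.right i)
  calc antipodeMap k H (fundOp k H (g ⊗ₜ[k] h))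
      = ∑ i ∈ r.index, ∑ j ∈ (r1 i).index,
          (r1 i).left j ⊗ₜ[k] (antipode (R := k) ((r1 i).right j) * (r.right i * h)) := by
        rw [fundOp_tmul k H g h r, map_sum]
        exact Finset.sum_congr rfl fun i _ => antipodeMap_tmul k H _ _ (r1 i)
    _ = ∑ i ∈ r.index, ∑ j ∈ (r2 i).index,
          r.left i ⊗ₜ[k] (antipode (R := k) ((r2 i).left j) * ((r2 i).right j * h)) := by
        have key := Coalgebra.sum_tmul_tmul_eq (R := k) r r1 r2
        have h2 := congrArg (LinearMap.lTensor H (LinearMap.mul' k H ∘ₗ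
          TensorProduct.map (antipode (R := k)) (LinearMap.mulRight k h))) key
        simpa [map_sum] using h2
    _ = ∑ i ∈ r.index, r.left i ⊗ₜ[k] (algebraMap k H (counit (R := k) (r.right i)) * h) := by
        refine Finset.sum_congr rfl fun i _ => ?_
        rw [← TensorProduct.tmul_sum]
        congr 1
        calc ∑ j ∈ (r2 i).index, antipode (R := k) ((r2 i).left j) * ((r2 i).right j * h)
            = (∑ j ∈ (r2 i).index, antipode (R := k) ((r2 i).left j) * (r2 i).right j) * h := by
              rw [Finset.sum_mul]
              exact Finset.sum_congr rfl fun j _ => (mul_assoc _ _ _).symm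
          _ = algebraMap k H (counit (R := k) (r.right i)) * h := by
              rw [sum_antipode_mul_eq_algebraMap_counit]
    _ = g ⊗ₜ[k] h := by
        simp_rw [← Algebra.smul_def, TensorProduct.tmul_smul, TensorProduct.smul_tmul',
          ← TensorProduct.sum_tmul]
        rw [sum_counit_smul k H g r]

noncomputable def mulRepr {ι κ : Type*} {x y : H} (rx : Coalgebra.Repr k x ι) (ry : Coalgebra.Repr k y κ) :
    Coalgebra.Repr k (x * y) (ι × κ) where
  index := rx.index ×ˢ ry.index
  left := fun p => rx.left p.1 * ry.left p.2
  right := fun p => rx.right p.1 * ry.right p.2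
  eq := by
    rw [Bialgebra.comul_mul, ← rx.eq, ← ry.eq, Finset.sum_mul_sum, Finset.sum_product]
    simp [Algebra.TensorProduct.tmul_mul_tmul]

lemma map23_fundOp_tmul {ι : Type*} (a b c : H) (s : Coalgebra.Repr k b ι) :
    map23 (fundOp k H) (a ⊗ₜ[k] (b ⊗ₜ[k] c)) =
      ∑ j ∈ s.index, a ⊗ₜ[k] (s.left j ⊗ₜ[k] (s.right j * c)) := by
  rw [map23, LinearMap.lTensor_tmul, fundOp_tmul k H b c s, TensorProduct.tmul_sum]

lemma map12_fundOp_tmul {ι : Type*} (a b c : H) (r : Coalgebra.Repr k a ι) :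
    map12 (fundOp k H) (a ⊗ₜ[k] (b ⊗ₜ[k] c)) =
      ∑ i ∈ r.index, r.left i ⊗ₜ[k] ((r.right i * b) ⊗ₜ[k] c) := by
  rw [map12]
  simp only [LinearMap.comp_apply, LinearEquiv.coe_coe, TensorProduct.assoc_symm_tmul,
    LinearMap.rTensor_tmul]
  rw [fundOp_tmul k H a b r, TensorProduct.sum_tmul, ← LinearEquiv.coe_coe, map_sum]
  simp [TensorProduct.assoc_tmul]

lemma map13_fundOp_tmul {ι : Type*} (a b c : H) (r : Coalgebra.Repr k a ι) :
    map13 (fundOp k H) (a ⊗ₜ[k] (b ⊗ₜ[k] c)) =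
      ∑ i ∈ r.index, r.left i ⊗ₜ[k] (b ⊗ₜ[k] (r.right i * c)) := by
  rw [map13]
  simp only [LinearMap.comp_apply, LinearMap.lTensor_tmul, flipMap, LinearEquiv.coe_coe,
    TensorProduct.comm_tmul]
  rw [map12_fundOp_tmul k H a c b r, map_sum]
  simp [flipMap]

lemma fundOp_pentagon :
    map12 (fundOp k H) ∘ₗ map13 (fundOp k H) ∘ₗ map23 (fundOp k H) =
      map23 (fundOp k H) ∘ₗ map12 (fundOp k H) := by
  apply TensorProduct.ext'
  intro g y
  induction y using TensorProduct.induction_on with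
  | zero => simp
  | add x y hx hy => simp only [TensorProduct.tmul_add, map_add, hx, hy]
  | tmul h l =>
    have r : Coalgebra.Repr k g (H × H) := ℛ k g
    have r1 : ∀ i : H × H, Coalgebra.Repr k (r.left i) (H × H) := fun i => ℛ k (r.left i)
    have r2 : ∀ i : H × H, Coalgebra.Repr k (r.right i) (H × H) := fun i => ℛ k (r.right i)
    have s : Coalgebra.Repr k h (H × H) := ℛ k h
    have key := Coalgebra.sum_tmul_tmul_eq (R := k) r r1 r2
    have main : ∀ j : s.ι,
        (∑ i ∈ r.index, ∑ m ∈ (r1 i).index,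
          (r1 i).left m ⊗ₜ[k] (((r1 i).right m * s.left j) ⊗ₜ[k] (r.right i * (s.right j * l))))
        = ∑ i ∈ r.index, ∑ m ∈ (r2 i).index,
          r.left i ⊗ₜ[k] (((r2 i).left m * s.left j) ⊗ₜ[k] ((r2 i).right m * (s.right j * l))) := by
      intro j
      have h2 := congrArg (LinearMap.lTensor H (TensorProduct.map
        (LinearMap.mulRight k (s.left j)) (LinearMap.mulRight k (s.right j * l)))) key
      simpa only [map_sum, LinearMap.lTensor_tmul, TensorProduct.map_tmul,
        LinearMap.mulRight_apply] using h2
    calc (map12 (fundOp k H) ∘ₗ map13 (fundOp k H) ∘ₗ map23 (fundOp k H)) (g ⊗ₜ[k] (h ⊗ₜ[k] l))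
        = ∑ j ∈ s.index, ∑ i ∈ r.index, ∑ m ∈ (r1 i).index,
            (r1 i).left m ⊗ₜ[k]
              (((r1 i).right m * s.left j) ⊗ₜ[k] (r.right i * (s.right j * l))) := by
          rw [LinearMap.comp_apply, LinearMap.comp_apply, map23_fundOp_tmul k H g h l s,
            map_sum, map_sum]
          refine Finset.sum_congr rfl fun j _ => ?_
          rw [map13_fundOp_tmul k H g (s.left j) (s.right j * l) r, map_sum]
          exact Finset.sum_congr rfl fun i _ =>
            map12_fundOp_tmul k H (r.left i) (s.left j) (r.right i * (s.right j * l)) (r1 i)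
      _ = ∑ j ∈ s.index, ∑ i ∈ r.index, ∑ m ∈ (r2 i).index,
            r.left i ⊗ₜ[k]
              (((r2 i).left m * s.left j) ⊗ₜ[k] ((r2 i).right m * (s.right j * l))) :=
          Finset.sum_congr rfl fun j _ => main j
      _ = (map23 (fundOp k H) ∘ₗ map12 (fundOp k H)) (g ⊗ₜ[k] (h ⊗ₜ[k] l)) := by
          rw [LinearMap.comp_apply, map12_fundOp_tmul k H g h l r, map_sum, Finset.sum_comm]
          refine Finset.sum_congr rfl fun i _ => ?_
          rw [map23_fundOp_tmul k H (r.left i) (r.right i * h) l (mulRepr k H (r2 i) s)]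
          simp only [mulRepr]
          rw [Finset.sum_product, Finset.sum_comm]
          simp_rw [mul_assoc]

/-- for a Hopf algebra `H` with antipode `S`, the map
`R'(g ⊗ h) = Σ g₍₁₎ ⊗ S(g₍₂₎)h` is a solution of the Hopf equation. -/
theorem antipodeMap_isHopfSolution : IsHopfSolution (antipodeMap k H) := by
  unfold IsHopfSolution
  have h12a : map12 (fundOp k H) * map12 (antipodeMap k H) = 1 := by
    show map12 (fundOp k H) ∘ₗ map12 (antipodeMap k H) = LinearMap.id
    rw [← map12_comp, fundOp_comp_antipodeMap, map12_id]
  have h12b : map12 (antipodeMap k H) * map12 (fundOp k H) = 1 := by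
    show map12 (antipodeMap k H) ∘ₗ map12 (fundOp k H) = LinearMap.id
    rw [← map12_comp, antipodeMap_comp_fundOp, map12_id]
  have h13a : map13 (fundOp k H) * map13 (antipodeMap k H) = 1 := by
    show map13 (fundOp k H) ∘ₗ map13 (antipodeMap k H) = LinearMap.id
    rw [← map13_comp, fundOp_comp_antipodeMap, map13_id]
  have h13b : map13 (antipodeMap k H) * map13 (fundOp k H) = 1 := by
    show map13 (antipodeMap k H) ∘ₗ map13 (fundOp k H) = LinearMap.id
    rw [← map13_comp, antipodeMap_comp_fundOp, map13_id]
  have h23a : map23 (fundOp k H) * map23 (antipodeMap k H) = 1 := by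
    show map23 (fundOp k H) ∘ₗ map23 (antipodeMap k H) = LinearMap.id
    rw [← map23_comp, fundOp_comp_antipodeMap, map23_id]
  have h23b : map23 (antipodeMap k H) * map23 (fundOp k H) = 1 := by
    show map23 (antipodeMap k H) ∘ₗ map23 (fundOp k H) = LinearMap.id
    rw [← map23_comp, antipodeMap_comp_fundOp, map23_id]
  have hp : map12 (fundOp k H) * map13 (fundOp k H) * map23 (fundOp k H)
      = map23 (fundOp k H) * map12 (fundOp k H) := by
    rw [mul_assoc]
    exact fundOp_pentagon k H
  exact monoid_hopf_of_pentagon h12a h12b h13a h13b h23a h23b hp
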